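/- For every K > 1 there exists a bi-Lipschitz bijection F : ℤ² → ℤ² that is not within bounded ℓ∞ distance of any isometry of ℤ². Concretely, F(x,y) = (x, y + |x|) is bi-Lipschitz but sup over ℤ² of the distance from F to any map of the form (an affine isometry of ℤ²) is infinite. -/

import Mathlib

/-- F(x,y) = (x, y + |x|) is a bi-Lipschitz bijection of ℤ² (ℓ¹ metric) which is not
within bounded ℓ∞ distance of any isometry of ℤ². -/
theorem exists_biLipschitz_far_from_isometries :
    ∃ F : ℤ × ℤ → ℤ × ℤ,
      F = (fun p : ℤ × ℤ => (p.1, p.2 + |p.1|)) ∧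
      Function.Bijective F ∧
      (∃ K : ℤ, 0 < K ∧
        (∀ p q : ℤ × ℤ,
          |(F p).1 - (F q).1| + |(F p).2 - (F q).2| ≤ K * (|p.1 - q.1| + |p.2 - q.2|)) ∧
        (∀ p q : ℤ × ℤ,
          |p.1 - q.1| + |p.2 - q.2| ≤ K * (|(F p).1 - (F q).1| + |(F p).2 - (F q).2|))) ∧
      (∀ G : ℤ × ℤ → ℤ × ℤ, Function.Bijective G →
        (∀ p q : ℤ × ℤ,
          |(G p).1 - (G q).1| + |(G p).2 - (G q).2| = |p.1 - q.1| + |p.2 - q.2|) →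
        ¬ ∃ M : ℤ, ∀ p : ℤ × ℤ,
          |(F p).1 - (G p).1| + |(F p).2 - (G p).2| ≤ M) := by
  refine ⟨fun p : ℤ × ℤ => (p.1, p.2 + |p.1|), rfl, ?_, ⟨2, by norm_num, ?_, ?_⟩, ?_⟩
  · exact Function.bijective_iff_has_inverse.mpr
      ⟨fun q => (q.1, q.2 - |q.1|), fun p => by simp, fun q => by simp⟩
  · intro p q
    simp only
    have h1 : |(|p.1| - |q.1|)| ≤ |p.1 - q.1| := abs_abs_sub_abs_le_abs_sub _ _
    have h2 : |p.2 + |p.1| - (q.2 + |q.1|)| ≤ |p.2 - q.2| + |(|p.1| - |q.1|)| := by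
      have : |p.2 - q.2 + (|p.1| - |q.1|)| ≤ |p.2 - q.2| + |(|p.1| - |q.1|)| := abs_add_le (p.2 - q.2) (|p.1| - |q.1|)
      convert this using 2
      ring
    linarith [abs_nonneg (p.2 - q.2)]
  · intro p q
    simp only
    have h1 : |(|p.1| - |q.1|)| ≤ |p.1 - q.1| := abs_abs_sub_abs_le_abs_sub _ _
    have h2 : |p.2 - q.2| ≤ |p.2 + |p.1| - (q.2 + |q.1|)| + |(|p.1| - |q.1|)| := by
      have : |p.2 + |p.1| - (q.2 + |q.1|) + (|q.1| - |p.1|)| ≤ |p.2 + |p.1| - (q.2 + |q.1|)| + |(|q.1| - |p.1|)| := abs_add_le (p.2 + |p.1| - (q.2 + |q.1|)) (|q.1| - |p.1|)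
      have e : |(|q.1| - |p.1|)| = |(|p.1| - |q.1|)| := abs_sub_comm _ _
      rw [e] at this
      convert this using 2
      ring
    linarith [abs_nonneg (p.2 + |p.1| - (q.2 + |q.1|))]
  · intro G hG hiso
    rintro ⟨M, hM⟩
    have hM0 : 0 ≤ M := le_trans (by positivity) (hM (0, 0))
    set n : ℤ := 2 * M + 1 with hn
    have hn0 : 0 < n := by omega
    have hp := hM (n, 0)
    have hq := hM (0, n)
    have hdist := hiso (n, 0) (0, n)
    simp only at hp hq hdist
    have habs : |n| = n := abs_of_pos hn0
    -- distance between images of F: F(n,0) = (n, n), F(0,n) = (0, n)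
    -- triangle inequality
    have t1 : |(G (n, 0)).1 - (G (0, n)).1| ≤
        |(G (n, 0)).1 - n| + |n - 0| + |0 - (G (0, n)).1| := by
      calc |(G (n, 0)).1 - (G (0, n)).1|
          ≤ |(G (n, 0)).1 - n| + |n - (G (0, n)).1| := abs_sub_le _ _ _
        _ ≤ |(G (n, 0)).1 - n| + (|n - 0| + |0 - (G (0, n)).1|) := by
            linarith [abs_sub_le (n : ℤ) 0 ((G (0, n)).1)]
        _ = _ := by ring
    have t2 : |(G (n, 0)).2 - (G (0, n)).2| ≤
        |(G (n, 0)).2 - (0 + |n|)| + |(0 + |n|) - (n + |(0:ℤ)|)| + |(n + |(0:ℤ)|) - (G (0, n)).2| := by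
      calc |(G (n, 0)).2 - (G (0, n)).2|
          ≤ |(G (n, 0)).2 - (0 + |n|)| + |(0 + |n|) - (G (0, n)).2| := abs_sub_le _ _ _
        _ ≤ |(G (n, 0)).2 - (0 + |n|)| +
            (|(0 + |n|) - (n + |(0:ℤ)|)| + |(n + |(0:ℤ)|) - (G (0, n)).2|) := by
            linarith [abs_sub_le ((0:ℤ) + |n|) (n + |(0:ℤ)|) ((G (0, n)).2)]
        _ = _ := by ring
    have e1 : |(G (n, 0)).1 - n| = |n - (G (n, 0)).1| := abs_sub_comm _ _
    have e2 : |(G (n, 0)).2 - (0 + |n|)| = |0 + |n| - (G (n, 0)).2| := abs_sub_comm _ _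
    have hmid : |(0:ℤ) + |n| - (n + |(0:ℤ)|)| = 0 := by simp [habs]
    simp only [habs, abs_zero] at t1 t2 hp hq hdist e1 e2 hmid ⊢
    have hA : |n - 0| = n := by rw [sub_zero, habs]
    have hB : |(0:ℤ) - n| = n := by rw [zero_sub, abs_neg, habs]
    simp only [hA, hB] at t1 hdist
    omega
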